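/- If w is an infinite square-free word over {0,1,2}, and w̄ is the word over {0,1,2,3} obtained from w by inserting the letter 3 between the two letters of every occurrence of the factors 02 and 20, then w̄ is an infinite Dean word (square-free and reduced). -/

import Mathlib

def SqFree {α : Type*} (w : List α) : Prop :=
  ∀ v : List α, v ≠ [] → ¬ (v ++ v) <:+: w

def Reduced (w : List (Fin 4)) : Prop :=
  ∀ p ∈ ([[0,2],[2,0],[1,3],[3,1]] : List (List (Fin 4))), ¬ p <:+: w

def DeanWord (w : List (Fin 4)) : Prop := Reduced w ∧ SqFree w

def IFactor {α : Type*} (v : List α) (w : ℕ → α) : Prop :=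
  ∃ i, v = (List.range v.length).map fun k => w (i + k)

def ISqFree {α : Type*} (w : ℕ → α) : Prop :=
  ∀ v : List α, v ≠ [] → ¬ IFactor (v ++ v) w

def IReduced (w : ℕ → Fin 4) : Prop :=
  ∀ p ∈ ([[0,2],[2,0],[1,3],[3,1]] : List (List (Fin 4))), ¬ IFactor p w

def IDean (w : ℕ → Fin 4) : Prop := IReduced w ∧ ISqFree w

def emb : Fin 3 → Fin 4 := Fin.castLE (by norm_num)

/-- Insertion of the letter `3` in the middle of every occurrence of `02` or `20`. -/
def barL : List (Fin 3) → List (Fin 4)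
  | [] => []
  | [a] => [emb a]
  | a :: b :: t =>
      if (a = 0 ∧ b = 2) ∨ (a = 2 ∧ b = 0) then emb a :: 3 :: barL (b :: t)
      else emb a :: barL (b :: t)

/-- The infinite word obtained by applying the insertion operation to an infinite word:
`barL` applied to the first `2*m+2` letters has length `> m`, so letter `m` is determined. -/
def bar (w : ℕ → Fin 3) : ℕ → Fin 4 :=
  fun m => (barL ((List.range (2 * m + 2)).map w)).getD m 0
/-! ### Auxiliary development -/

/-- Allowed adjacencies in the image of `barL`. -/
def P3 : Fin 4 → Fin 4 → Prop := fun x y =>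
  ¬((x=0∧y=2)∨(x=2∧y=0)∨(x=1∧y=3)∨(x=3∧y=1)∨(x=3∧y=3))

instance : DecidableRel P3 := fun _ _ => by unfold P3; infer_instance

lemma emb_ne_three (a : Fin 3) : emb a ≠ 3 := by fin_cases a <;> decide

lemma barL_head (a : Fin 3) (t : List (Fin 3)) :
    ∃ r, barL (a :: t) = emb a :: r := by
  cases t with
  | nil => exact ⟨[], rfl⟩
  | cons b t =>
      show ∃ r, (if (a = 0 ∧ b = 2) ∨ (a = 2 ∧ b = 0) then emb a :: 3 :: barL (b :: t)
        else emb a :: barL (b :: t)) = emb a :: r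
      split_ifs <;> exact ⟨_, rfl⟩

lemma chain_barL : ∀ l : List (Fin 3), List.Chain' P3 (barL l)
  | [] => by simp [barL]; exact List.isChain_nil
  | [a] => by simp [barL]; exact List.isChain_singleton _
  | a :: b :: t => by
      have ih := chain_barL (b :: t)
      obtain ⟨r, hr⟩ := barL_head b t
      show List.Chain' P3 (if (a = 0 ∧ b = 2) ∨ (a = 2 ∧ b = 0) then emb a :: 3 :: barL (b :: t)
        else emb a :: barL (b :: t))
      rw [hr] at ih ⊢
      split_ifs with h
      · refine List.isChain_cons_cons.2 ⟨?_, List.isChain_cons_cons.2 ⟨?_, ih⟩⟩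
        · rcases h with ⟨h1, _⟩ | ⟨h1, _⟩ <;> subst h1 <;> decide
        · rcases h with ⟨_, h2⟩ | ⟨_, h2⟩ <;> subst h2 <;> decide
      · refine List.isChain_cons_cons.2 ⟨?_, ih⟩
        revert h; fin_cases a <;> fin_cases b <;> decide

lemma filter_barL : ∀ l : List (Fin 3), (barL l).filter (· ≠ 3) = l.map emb
  | [] => by simp [barL]
  | [a] => by simp [barL, emb_ne_three a]
  | a :: b :: t => by
      have ih := filter_barL (b :: t)
      simp only [ne_eq, decide_not] at ih
      show List.filter (· ≠ 3) (if (a = 0 ∧ b = 2) ∨ (a = 2 ∧ b = 0)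
          then emb a :: 3 :: barL (b :: t) else emb a :: barL (b :: t)) = _
      split_ifs with h <;>
        simp [List.filter_cons, emb_ne_three a, ih]

def r3 : Fin 4 → Fin 3 := fun x => if h : x.val < 3 then ⟨x.val, h⟩ else 0

lemma r3_emb : ∀ a : Fin 3, r3 (emb a) = a := by decide

lemma infix_filter {v l : List (Fin 4)} (p : Fin 4 → Bool) (h : v <:+: l) :
    v.filter p <:+: l.filter p := by
  obtain ⟨s, t, rfl⟩ := h
  exact ⟨s.filter p, t.filter p, by simp⟩

lemma infix_map {α β : Type*} (f : α → β) {v l : List α} (h : v <:+: l) :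
    v.map f <:+: l.map f := by
  obtain ⟨s, t, rfl⟩ := h
  exact ⟨s.map f, t.map f, by simp⟩

lemma sqfree_barL (u : List (Fin 3)) (hu : SqFree u) : SqFree (barL u) := by
  intro v hv hinf
  set v' : List (Fin 4) := v.filter (· ≠ 3) with hv'
  have h1 : (v' ++ v') <:+: u.map emb := by
    rw [← filter_barL u]
    have := infix_filter (· ≠ 3) hinf
    rwa [List.filter_append] at this
  have h2 : (v'.map r3 ++ v'.map r3) <:+: u := by
    have := infix_map r3 h1
    rw [List.map_append] at this
    have heq : (u.map emb).map r3 = u := by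
      rw [List.map_map]
      have : r3 ∘ emb = id := funext r3_emb
      rw [this, List.map_id]
    rwa [heq] at this
  have h3 : v'.map r3 = [] := by
    by_contra hne
    exact hu _ hne h2
  have h4 : v' = [] := by simpa using h3
  have h5 : ∀ x ∈ v, x = 3 := by
    intro x hx
    have := List.filter_eq_nil_iff.1 h4 x hx
    simpa using this
  -- v is a nonempty block of 3s, so [3,3] is an infix of barL u
  have hrep : v ++ v = List.replicate (v.length + v.length) 3 := by
    rw [List.eq_replicate_iff]
    constructor
    · simp
    · intro b hb
      rcases List.mem_append.1 hb with hb | hb <;> exact h5 b hb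
  have hlen : 1 ≤ v.length := List.length_pos_iff.2 hv
  have h33 : ([3, 3] : List (Fin 4)) <:+: barL u := by
    refine List.IsInfix.trans ?_ hinf
    rw [hrep]
    refine ⟨[], List.replicate (v.length + v.length - 2) 3, ?_⟩
    have : ([3,3] : List (Fin 4)) = List.replicate 2 3 := rfl
    rw [List.nil_append, this, ← List.replicate_add]
    congr 1
    omega
  have := (chain_barL u).infix h33
  have := (List.isChain_cons_cons.1 this).1
  exact this (by decide)

lemma reduced_barL (u : List (Fin 3)) : Reduced (barL u) := by
  intro p hp hinf
  have hch := (chain_barL u).infix hinf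
  simp only [List.mem_cons, List.mem_singleton] at hp
  rcases hp with rfl | rfl | rfl | rfl | h
  · exact (List.isChain_cons_cons.1 hch).1 (by decide)
  · exact (List.isChain_cons_cons.1 hch).1 (by decide)
  · exact (List.isChain_cons_cons.1 hch).1 (by decide)
  · exact (List.isChain_cons_cons.1 hch).1 (by decide)
  · simp at h

lemma barL_length : ∀ l : List (Fin 3), l.length ≤ (barL l).length
  | [] => by simp [barL]
  | [a] => by simp [barL]
  | a :: b :: t => by
      have ih := barL_length (b :: t)
      simp only [List.length_cons] at ih
      show _ ≤ (if (a = 0 ∧ b = 2) ∨ (a = 2 ∧ b = 0) then emb a :: 3 :: barL (b :: t)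
        else emb a :: barL (b :: t)).length
      split_ifs <;> simp <;> omega

lemma barL_prefix_snoc : ∀ (l : List (Fin 3)) (x : Fin 3), barL l <+: barL (l ++ [x])
  | [], x => List.nil_prefix
  | [a], x => by
      obtain ⟨r, hr⟩ := barL_head a [x]
      rw [show ([a] ++ [x] : List (Fin 3)) = a :: [x] from rfl, hr]
      exact ⟨r, rfl⟩
  | a :: b :: t, x => by
      have ih := barL_prefix_snoc (b :: t) x
      show (if (a = 0 ∧ b = 2) ∨ (a = 2 ∧ b = 0) then emb a :: 3 :: barL (b :: t)
          else emb a :: barL (b :: t)) <+: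
        (if (a = 0 ∧ b = 2) ∨ (a = 2 ∧ b = 0) then emb a :: 3 :: barL (b :: t ++ [x])
          else emb a :: barL (b :: t ++ [x]))
      split_ifs with h
      · exact List.cons_prefix_cons.2 ⟨rfl, List.cons_prefix_cons.2 ⟨rfl, ih⟩⟩
      · exact List.cons_prefix_cons.2 ⟨rfl, ih⟩

/-- prefix of the infinite word -/
def Pw (w : ℕ → Fin 3) (n : ℕ) : List (Fin 3) := (List.range n).map w

lemma barL_Pw_prefix (w : ℕ → Fin 3) {m n : ℕ} (h : m ≤ n) :
    barL (Pw w m) <+: barL (Pw w n) := by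
  induction n with
  | zero => simp at h; subst h; exact List.prefix_refl _
  | succ n ih =>
      rcases Nat.lt_or_ge m (n+1) with h' | h'
      · have := ih (by omega)
        refine this.trans ?_
        have : Pw w (n+1) = Pw w n ++ [w n] := by
          simp [Pw, List.range_succ]
        rw [this]
        exact barL_prefix_snoc _ _
      · have : m = n + 1 := by omega
        subst this; exact List.prefix_refl _

lemma getD_prefix {l₁ l₂ : List (Fin 4)} (h : l₁ <+: l₂) {m : ℕ} (hm : m < l₁.length) :
    l₁.getD m 0 = l₂.getD m 0 := by
  obtain ⟨t, rfl⟩ := h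
  rw [List.getD_eq_getElem _ _ hm,
    List.getD_eq_getElem _ _ (by simp; omega : m < (l₁ ++ t).length),
    List.getElem_append_left hm]

lemma Pw_length (w : ℕ → Fin 3) (n : ℕ) : (Pw w n).length = n := by simp [Pw]

lemma bar_eq_getD (w : ℕ → Fin 3) {m n : ℕ} (h : m < n) :
    bar w m = (barL (Pw w n)).getD m 0 := by
  set N := max n (2*m+2) with hN
  have lenk : ∀ k, m < k → m < (barL (Pw w k)).length := by
    intro k hk
    have := barL_length (Pw w k)
    rw [Pw_length] at this
    omega
  have e1 := getD_prefix (barL_Pw_prefix w (le_max_left n (2*m+2))) (lenk n h)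
  have e2 := getD_prefix (barL_Pw_prefix w (le_max_right n (2*m+2))) (lenk (2*m+2) (by omega))
  have : bar w m = (barL (Pw w (2*m+2))).getD m 0 := rfl
  rw [this, e2, ← e1]

/-- a segment of a list described by `getD` is an infix -/
lemma segment_infix {l : List (Fin 4)} {i L : ℕ} (h : i + L ≤ l.length) :
    (List.range L).map (fun k => l.getD (i + k) 0) <:+: l := by
  have hseg : (List.range L).map (fun k => l.getD (i + k) 0) = (l.drop i).take L := by
    apply List.ext_getElem
    · simp; omega
    · intro k h1 h2
      simp only [List.length_map, List.length_range] at h1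
      simp only [List.getElem_map, List.getElem_range]
      rw [List.getD_eq_getElem _ _ (by omega : i + k < l.length)]
      rw [List.getElem_take, List.getElem_drop]
  rw [hseg]
  exact ((List.take_prefix L _).isInfix).trans ((List.drop_suffix i l).isInfix)

lemma ifactor_infix {w : ℕ → Fin 3} {v : List (Fin 4)} (h : IFactor v (bar w)) :
    ∃ n, v <:+: barL (Pw w n) := by
  obtain ⟨i, hv⟩ := h
  set L := v.length with hL
  set n := i + L + 1 with hn
  refine ⟨n, ?_⟩
  have hlen : i + L ≤ (barL (Pw w n)).length := by
    have := barL_length (Pw w n)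
    rw [Pw_length] at this
    omega
  have : v = (List.range L).map (fun k => (barL (Pw w n)).getD (i + k) 0) := by
    rw [hv]
    apply List.map_congr_left
    intro k hk
    have hk' : k < L := List.mem_range.1 hk
    exact bar_eq_getD w (by omega)
  rw [this]
  exact segment_infix hlen

lemma sqfree_Pw (w : ℕ → Fin 3) (hw : ISqFree w) (n : ℕ) : SqFree (Pw w n) := by
  intro x hx hinf
  obtain ⟨s, t, hst⟩ := hinf
  set i := s.length with hi
  set L := (x ++ x).length with hLdef
  refine hw x hx ⟨i, ?_⟩
  have hxx : (x ++ x).length = x.length + x.length := by simp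
  have hlen : i + L + t.length = n := by
    have := congrArg List.length hst
    simp [Pw] at this
    omega
  apply List.ext_getElem
  · simp [← hLdef]
  · intro k h1 h2
    have hkL : k < L := by rw [hLdef]; exact h1
    simp only [List.getElem_map, List.getElem_range]
    have hik : i + k < n := by omega
    have A : (Pw w n)[i + k]? = some (w (i + k)) := by
      simp [Pw, List.getElem?_map, List.getElem?_range hik]
    have B : (Pw w n)[i + k]? = some ((x ++ x)[k]'h1) := by
      rw [← hst]
      rw [List.getElem?_append_left (by simp; omega : i + k < (s ++ (x ++ x)).length)]
      rw [List.getElem?_append_right (by omega : s.length ≤ i + k)]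
      rw [show i + k - s.length = k by omega]
      exact List.getElem?_eq_getElem h1
    exact Option.some.inj (B.symm.trans A)

theorem stmt3 (w : ℕ → Fin 3) (hw : ISqFree w) : IDean (bar w) := by
  constructor
  · intro p hp hif
    obtain ⟨n, hinf⟩ := ifactor_infix hif
    exact reduced_barL (Pw w n) p hp hinf
  · intro v hv hif
    obtain ⟨n, hinf⟩ := ifactor_infix hif
    exact sqfree_barL (Pw w n) (sqfree_Pw w hw n) v hv hinf
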